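/- η-law for CBPV thunks (one half): for every closed CBPV value v of type Uκ, v ≲ctx thunk(force(v)). -/

import Mathlib

namespace CBPV

mutual
/-- Value types (with `n` free type variables). -/
inductive VTy : ℕ → Type
  | U {n} (κ : CTy n) : VTy n
  | unit {n} : VTy n
  | sum {n} (φ₁ φ₂ : VTy n) : VTy n
  | prod {n} (φ₁ φ₂ : VTy n) : VTy n
/-- Computation types (with `n` free type variables). -/
inductive CTy : ℕ → Type
  | var {n} (i : Fin n) : CTy n
  | F {n} (φ : VTy n) : CTy n
  | arr {n} (φ : VTy n) (κ : CTy n) : CTy n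
  | tensor {n} (κ₁ κ₂ : CTy n) : CTy n
  | mu {n} (κ : CTy (n+1)) : CTy n
end

/-- Lifting of a renaming of type variables under a binder. -/
def liftTR {n m : ℕ} (r : Fin n → Fin m) : Fin (n+1) → Fin (m+1) :=
  Fin.cases 0 (fun j => (r j).succ)

mutual
/-- Renaming of type variables in value types. -/
def VTy.rename : ∀ {n m : ℕ}, (Fin n → Fin m) → VTy n → VTy m
  | _, _, r, .U κ => .U (CTy.rename r κ)
  | _, _, _, .unit => .unit
  | _, _, r, .sum φ₁ φ₂ => .sum (VTy.rename r φ₁) (VTy.rename r φ₂)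
  | _, _, r, .prod φ₁ φ₂ => .prod (VTy.rename r φ₁) (VTy.rename r φ₂)
/-- Renaming of type variables in computation types. -/
def CTy.rename : ∀ {n m : ℕ}, (Fin n → Fin m) → CTy n → CTy m
  | _, _, r, .var i => .var (r i)
  | _, _, r, .F φ => .F (VTy.rename r φ)
  | _, _, r, .arr φ κ => .arr (VTy.rename r φ) (CTy.rename r κ)
  | _, _, r, .tensor κ₁ κ₂ => .tensor (CTy.rename r κ₁) (CTy.rename r κ₂)
  | _, _, r, .mu κ => .mu (CTy.rename (liftTR r) κ)
end

/-- Lifting of a type substitution under a binder. -/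
def liftTS {n m : ℕ} (σ : Fin n → CTy m) : Fin (n+1) → CTy (m+1) :=
  Fin.cases (.var 0) (fun j => (σ j).rename Fin.succ)

mutual
/-- Substitution of type variables in value types. -/
def VTy.subst : ∀ {n m : ℕ}, (Fin n → CTy m) → VTy n → VTy m
  | _, _, σ, .U κ => .U (CTy.subst σ κ)
  | _, _, _, .unit => .unit
  | _, _, σ, .sum φ₁ φ₂ => .sum (VTy.subst σ φ₁) (VTy.subst σ φ₂)
  | _, _, σ, .prod φ₁ φ₂ => .prod (VTy.subst σ φ₁) (VTy.subst σ φ₂)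
/-- Substitution of type variables in computation types. -/
def CTy.subst : ∀ {n m : ℕ}, (Fin n → CTy m) → CTy n → CTy m
  | _, _, σ, .var i => σ i
  | _, _, σ, .F φ => .F (VTy.subst σ φ)
  | _, _, σ, .arr φ κ => .arr (VTy.subst σ φ) (CTy.subst σ κ)
  | _, _, σ, .tensor κ₁ κ₂ => .tensor (CTy.subst σ κ₁) (CTy.subst σ κ₂)
  | _, _, σ, .mu κ => .mu (CTy.subst (liftTS σ) κ)
end

/-- `κ[μα.κ/α]` for `κ` with one free type variable. -/
def substMu (κ : CTy 1) : CTy 0 := CTy.subst (fun _ => .mu κ) κ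

abbrev VTy0 := VTy 0
abbrev CTy0 := CTy 0

/-- Typing contexts: lists of closed value types. -/
abbrev Cx := List VTy0

/-- Typed de Bruijn variables. -/
inductive Var : Cx → VTy0 → Type
  | vz {Γ φ} : Var (φ :: Γ) φ
  | vs {Γ φ ψ} : Var Γ φ → Var (ψ :: Γ) φ

mutual
/-- Intrinsically typed values of CBPV. -/
inductive Val : Cx → VTy0 → Type
  | var {Γ φ} : Var Γ φ → Val Γ φ
  | star {Γ} : Val Γ .unit
  | inl {Γ φ₁ φ₂} : Val Γ φ₁ → Val Γ (.sum φ₁ φ₂)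
  | inr {Γ φ₁ φ₂} : Val Γ φ₂ → Val Γ (.sum φ₁ φ₂)
  | pair {Γ φ₁ φ₂} : Val Γ φ₁ → Val Γ φ₂ → Val Γ (.prod φ₁ φ₂)
  | thunk {Γ κ} : Comp Γ κ → Val Γ (.U κ)
/-- Intrinsically typed computations of CBPV. -/
inductive Comp : Cx → CTy0 → Type
  | ret {Γ φ} : Val Γ φ → Comp Γ (.F φ)                 -- prod(v)
  | force {Γ κ} : Val Γ (.U κ) → Comp Γ κ
  | app {Γ φ κ} : Comp Γ (.arr φ κ) → Val Γ φ → Comp Γ κ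
  | lam {Γ φ κ} : Comp (φ :: Γ) κ → Comp Γ (.arr φ κ)
  | fold {Γ} {κ : CTy 1} : Comp Γ (substMu κ) → Comp Γ (.mu κ)
  | unfold {Γ} {κ : CTy 1} : Comp Γ (.mu κ) → Comp Γ (substMu κ)
  | choice {Γ κ} : Comp Γ κ → Comp Γ κ → Comp Γ κ       -- t ⊕ s
  | seq {Γ φ κ} : Comp Γ (.F φ) → Comp (φ :: Γ) κ → Comp Γ κ  -- s to x in t
  | case {Γ φ₁ φ₂ κ} : Val Γ (.sum φ₁ φ₂) →
      Comp (φ₁ :: Γ) κ → Comp (φ₂ :: Γ) κ → Comp Γ κ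
  | fst {Γ κ₁ κ₂} : Comp Γ (.tensor κ₁ κ₂) → Comp Γ κ₁
  | snd {Γ κ₁ κ₂} : Comp Γ (.tensor κ₁ κ₂) → Comp Γ κ₂
  | pair {Γ κ₁ κ₂} : Comp Γ κ₁ → Comp Γ κ₂ → Comp Γ (.tensor κ₁ κ₂)
  | pm {Γ φ₁ φ₂ κ} : Val Γ (.prod φ₁ φ₂) → Comp (φ₁ :: φ₂ :: Γ) κ → Comp Γ κ
end

/-- Renamings of term variables. -/
def Ren (Γ Δ : Cx) : Type := ∀ φ, Var Γ φ → Var Δ φ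

/-- Lifting a renaming under a binder. -/
def Ren.lift {Γ Δ : Cx} {φ : VTy0} (r : Ren Γ Δ) : Ren (φ :: Γ) (φ :: Δ) := fun ψ x =>
  match x with
  | .vz => .vz
  | .vs y => .vs (r ψ y)

mutual
/-- Renaming of free variables in values. -/
def renameV : ∀ {Γ Δ : Cx} {φ : VTy0}, Ren Γ Δ → Val Γ φ → Val Δ φ
  | _, _, _, r, .var x => .var (r _ x)
  | _, _, _, _, .star => .star
  | _, _, _, r, .inl v => .inl (renameV r v)
  | _, _, _, r, .inr v => .inr (renameV r v)
  | _, _, _, r, .pair v w => .pair (renameV r v) (renameV r w)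
  | _, _, _, r, .thunk t => .thunk (renameC r t)
/-- Renaming of free variables in computations. -/
def renameC : ∀ {Γ Δ : Cx} {κ : CTy0}, Ren Γ Δ → Comp Γ κ → Comp Δ κ
  | _, _, _, r, .ret v => .ret (renameV r v)
  | _, _, _, r, .force v => .force (renameV r v)
  | _, _, _, r, .app t v => .app (renameC r t) (renameV r v)
  | _, _, _, r, .lam t => .lam (renameC r.lift t)
  | _, _, _, r, .fold t => .fold (renameC r t)
  | _, _, _, r, .unfold t => .unfold (renameC r t)
  | _, _, _, r, .choice t s => .choice (renameC r t) (renameC r s)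
  | _, _, _, r, .seq s t => .seq (renameC r s) (renameC r.lift t)
  | _, _, _, r, .case v s t => .case (renameV r v) (renameC r.lift s) (renameC r.lift t)
  | _, _, _, r, .fst t => .fst (renameC r t)
  | _, _, _, r, .snd t => .snd (renameC r t)
  | _, _, _, r, .pair t s => .pair (renameC r t) (renameC r s)
  | _, _, _, r, .pm v t => .pm (renameV r v) (renameC r.lift.lift t)
end

/-- Substitutions: maps from variables to values. -/
def Sub (Γ Δ : Cx) : Type := ∀ φ, Var Γ φ → Val Δ φ

/-- Lifting a substitution under a binder. -/
def Sub.lift {Γ Δ : Cx} {φ : VTy0} (σ : Sub Γ Δ) : Sub (φ :: Γ) (φ :: Δ) := fun ψ x =>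
  match x with
  | .vz => .var .vz
  | .vs y => renameV (fun _ z => .vs z) (σ ψ y)

mutual
/-- Simultaneous substitution in values. -/
def substV : ∀ {Γ Δ : Cx} {φ : VTy0}, Sub Γ Δ → Val Γ φ → Val Δ φ
  | _, _, _, σ, .var x => σ _ x
  | _, _, _, _, .star => .star
  | _, _, _, σ, .inl v => .inl (substV σ v)
  | _, _, _, σ, .inr v => .inr (substV σ v)
  | _, _, _, σ, .pair v w => .pair (substV σ v) (substV σ w)
  | _, _, _, σ, .thunk t => .thunk (substC σ t)
/-- Simultaneous substitution in computations. -/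
def substC : ∀ {Γ Δ : Cx} {κ : CTy0}, Sub Γ Δ → Comp Γ κ → Comp Δ κ
  | _, _, _, σ, .ret v => .ret (substV σ v)
  | _, _, _, σ, .force v => .force (substV σ v)
  | _, _, _, σ, .app t v => .app (substC σ t) (substV σ v)
  | _, _, _, σ, .lam t => .lam (substC σ.lift t)
  | _, _, _, σ, .fold t => .fold (substC σ t)
  | _, _, _, σ, .unfold t => .unfold (substC σ t)
  | _, _, _, σ, .choice t s => .choice (substC σ t) (substC σ s)
  | _, _, _, σ, .seq s t => .seq (substC σ s) (substC σ.lift t)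
  | _, _, _, σ, .case v s t => .case (substV σ v) (substC σ.lift s) (substC σ.lift t)
  | _, _, _, σ, .fst t => .fst (substC σ t)
  | _, _, _, σ, .snd t => .snd (substC σ t)
  | _, _, _, σ, .pair t s => .pair (substC σ t) (substC σ s)
  | _, _, _, σ, .pm v t => .pm (substV σ v) (substC σ.lift.lift t)
end

/-- The substitution replacing the last-bound variable by `v`. -/
def sub1 {Γ : Cx} {φ : VTy0} (v : Val Γ φ) : Sub (φ :: Γ) Γ := fun ψ x =>
  match x with
  | .vz => v
  | .vs y => .var y

/-- Single substitution `t[v/x]`. -/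
def subst1 {Γ : Cx} {φ : VTy0} {κ : CTy0} (t : Comp (φ :: Γ) κ) (v : Val Γ φ) : Comp Γ κ :=
  substC (sub1 v) t

/-- Weakening of a value. -/
def wkV {Γ : Cx} {φ ψ : VTy0} (v : Val Γ φ) : Val (ψ :: Γ) φ :=
  renameV (fun _ x => .vs x) v

/-- The small-step reduction relation `t → t'` on computations. -/
inductive CStep : ∀ {Γ : Cx} {κ : CTy0}, Comp Γ κ → Comp Γ κ → Prop
  | fold_unfold {Γ} {κ : CTy 1} (t : Comp Γ (.mu κ)) :
      CStep (.fold (.unfold t)) t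
  | app_cong {Γ φ κ} {t t' : Comp Γ (.arr φ κ)} (v : Val Γ φ) :
      CStep t t' → CStep (.app t v) (.app t' v)
  | app_beta {Γ φ κ} (M : Comp (φ :: Γ) κ) (v : Val Γ φ) :
      CStep (.app (.lam M) v) (subst1 M v)
  | fst_cong {Γ κ₁ κ₂} {t t' : Comp Γ (.tensor κ₁ κ₂)} :
      CStep t t' → CStep (.fst t) (.fst t')
  | snd_cong {Γ κ₁ κ₂} {t t' : Comp Γ (.tensor κ₁ κ₂)} :
      CStep t t' → CStep (.snd t) (.snd t')
  | fst_pair {Γ κ₁ κ₂} (t : Comp Γ κ₁) (s : Comp Γ κ₂) :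
      CStep (.fst (.pair t s)) t
  | snd_pair {Γ κ₁ κ₂} (t : Comp Γ κ₁) (s : Comp Γ κ₂) :
      CStep (.snd (.pair t s)) s
  | choice_l {Γ κ} (t s : Comp Γ κ) : CStep (.choice t s) t
  | choice_r {Γ κ} (t s : Comp Γ κ) : CStep (.choice t s) s
  | seq_cong {Γ φ κ} {s s' : Comp Γ (.F φ)} (t : Comp (φ :: Γ) κ) :
      CStep s s' → CStep (.seq s t) (.seq s' t)
  | seq_ret {Γ φ κ} {s : Comp Γ (.F φ)} {v : Val Γ φ} (t : Comp (φ :: Γ) κ) :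
      CStep s (.ret v) → CStep (.seq s t) (.app (.lam t) v)
  | case_inl {Γ φ₁ φ₂ κ} (v : Val Γ φ₁) (s : Comp (φ₁ :: Γ) κ) (r : Comp (φ₂ :: Γ) κ) :
      CStep (.case (.inl v) s r) (.app (.lam s) v)
  | case_inr {Γ φ₁ φ₂ κ} (v : Val Γ φ₂) (s : Comp (φ₁ :: Γ) κ) (r : Comp (φ₂ :: Γ) κ) :
      CStep (.case (.inr v) s r) (.app (.lam r) v)
  | force_thunk {Γ κ} (t : Comp Γ κ) : CStep (.force (.thunk t)) t
  | pm_pair {Γ φ₁ φ₂ κ} (v : Val Γ φ₁) (w : Val Γ φ₂) (t : Comp (φ₁ :: φ₂ :: Γ) κ) :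
      CStep (.pm (.pair v w) t) (.app (.lam (.app (.lam t) (wkV v))) w)

/-- `t ⇒ t'`: reflexive-transitive closure of `→`. -/
def CSteps {Γ : Cx} {κ : CTy0} : Comp Γ κ → Comp Γ κ → Prop :=
  Relation.ReflTransGen CStep

/-- `t⇓` (may-termination): `t` reduces to a term admitting no step. -/
def Conv {Γ : Cx} {κ : CTy0} (t : Comp Γ κ) : Prop :=
  ∃ t', CSteps t t' ∧ ∀ t'', ¬ CStep t' t''

/-- Sorted relations on values. -/
abbrev VRel : Type := ∀ (Γ : Cx) (φ : VTy0), Val Γ φ → Val Γ φ → Prop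

/-- Sorted relations on computations. -/
abbrev CRel : Type := ∀ (Γ : Cx) (κ : CTy0), Comp Γ κ → Comp Γ κ → Prop

/-- Compatibility with renamings of free variables. -/
def RenCompat (RV : VRel) (RC : CRel) : Prop :=
  (∀ (Γ Δ : Cx) (r : Ren Γ Δ) (φ : VTy0) (v w : Val Γ φ),
      RV Γ φ v w → RV Δ φ (renameV r v) (renameV r w)) ∧
  (∀ (Γ Δ : Cx) (r : Ren Γ Δ) (κ : CTy0) (t s : Comp Γ κ),
      RC Γ κ t s → RC Δ κ (renameC r t) (renameC r s))

/-- Congruences: renaming-compatible relations compatible with all term formers of CBPV. -/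
structure IsCong (RV : VRel) (RC : CRel) : Prop where
  rencompat : RenCompat RV RC
  var : ∀ Γ φ (x : Var Γ φ), RV Γ φ (.var x) (.var x)
  star : ∀ Γ, RV Γ .unit .star .star
  inl : ∀ Γ φ₁ φ₂ (v w : Val Γ φ₁),
    RV Γ φ₁ v w → RV Γ (.sum φ₁ φ₂) (.inl v) (.inl w)
  inr : ∀ Γ φ₁ φ₂ (v w : Val Γ φ₂),
    RV Γ φ₂ v w → RV Γ (.sum φ₁ φ₂) (.inr v) (.inr w)
  pairV : ∀ Γ φ₁ φ₂ (v₁ w₁ : Val Γ φ₁) (v₂ w₂ : Val Γ φ₂),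
    RV Γ φ₁ v₁ w₁ → RV Γ φ₂ v₂ w₂ →
    RV Γ (.prod φ₁ φ₂) (.pair v₁ v₂) (.pair w₁ w₂)
  thunk : ∀ Γ κ (t s : Comp Γ κ),
    RC Γ κ t s → RV Γ (.U κ) (.thunk t) (.thunk s)
  ret : ∀ Γ φ (v w : Val Γ φ),
    RV Γ φ v w → RC Γ (.F φ) (.ret v) (.ret w)
  force : ∀ Γ κ (v w : Val Γ (.U κ)),
    RV Γ (.U κ) v w → RC Γ κ (.force v) (.force w)
  app : ∀ Γ φ κ (t s : Comp Γ (.arr φ κ)) (v w : Val Γ φ),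
    RC Γ (.arr φ κ) t s → RV Γ φ v w → RC Γ κ (.app t v) (.app s w)
  lam : ∀ Γ φ κ (M N : Comp (φ :: Γ) κ),
    RC (φ :: Γ) κ M N → RC Γ (.arr φ κ) (.lam M) (.lam N)
  fold : ∀ Γ (κ : CTy 1) (t s : Comp Γ (substMu κ)),
    RC Γ (substMu κ) t s → RC Γ (.mu κ) (.fold t) (.fold s)
  unfold : ∀ Γ (κ : CTy 1) (t s : Comp Γ (.mu κ)),
    RC Γ (.mu κ) t s → RC Γ (substMu κ) (.unfold t) (.unfold s)
  choice : ∀ Γ κ (t s t' s' : Comp Γ κ),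
    RC Γ κ t s → RC Γ κ t' s' → RC Γ κ (.choice t t') (.choice s s')
  seq : ∀ Γ φ κ (s s' : Comp Γ (.F φ)) (t t' : Comp (φ :: Γ) κ),
    RC Γ (.F φ) s s' → RC (φ :: Γ) κ t t' → RC Γ κ (.seq s t) (.seq s' t')
  case : ∀ Γ φ₁ φ₂ κ (v w : Val Γ (.sum φ₁ φ₂))
      (s s' : Comp (φ₁ :: Γ) κ) (r r' : Comp (φ₂ :: Γ) κ),
    RV Γ (.sum φ₁ φ₂) v w → RC (φ₁ :: Γ) κ s s' → RC (φ₂ :: Γ) κ r r' →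
    RC Γ κ (.case v s r) (.case w s' r')
  fst : ∀ Γ κ₁ κ₂ (t s : Comp Γ (.tensor κ₁ κ₂)),
    RC Γ (.tensor κ₁ κ₂) t s → RC Γ κ₁ (.fst t) (.fst s)
  snd : ∀ Γ κ₁ κ₂ (t s : Comp Γ (.tensor κ₁ κ₂)),
    RC Γ (.tensor κ₁ κ₂) t s → RC Γ κ₂ (.snd t) (.snd s)
  pairC : ∀ Γ κ₁ κ₂ (t₁ s₁ : Comp Γ κ₁) (t₂ s₂ : Comp Γ κ₂),
    RC Γ κ₁ t₁ s₁ → RC Γ κ₂ t₂ s₂ →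
    RC Γ (.tensor κ₁ κ₂) (.pair t₁ t₂) (.pair s₁ s₂)
  pm : ∀ Γ φ₁ φ₂ κ (v w : Val Γ (.prod φ₁ φ₂)) (t s : Comp (φ₁ :: φ₂ :: Γ) κ),
    RV Γ (.prod φ₁ φ₂) v w → RC (φ₁ :: φ₂ :: Γ) κ t s →
    RC Γ κ (.pm v t) (.pm w s)

/-- Containment in the preorder `O` (whose value component is total). -/
def SubO (RC : CRel) : Prop :=
  ∀ Γ κ (t s : Comp Γ κ), RC Γ κ t s → Conv t → Conv s

/-- The contextual preorder on values: the greatest congruence contained in `O`. -/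
def CtxLeV (Γ : Cx) (φ : VTy0) (v w : Val Γ φ) : Prop :=
  ∃ RV RC, IsCong RV RC ∧ SubO RC ∧ RV Γ φ v w

/-- The contextual preorder on computations: the greatest congruence contained in `O`. -/
def CtxLeC (Γ : Cx) (κ : CTy0) (t s : Comp Γ κ) : Prop :=
  ∃ RV RC, IsCong RV RC ∧ SubO RC ∧ RC Γ κ t s

/-- Applicative (weak) simulations for CBPV. -/
structure IsSim (RV : VRel) (RC : CRel) : Prop where
  substV : ∀ (Γ Δ : Cx) (σ : Sub Γ Δ) (φ : VTy0) (v w : Val Γ φ),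
    RV Γ φ v w → RV Δ φ (substV σ v) (substV σ w)
  substC : ∀ (Γ Δ : Cx) (σ : Sub Γ Δ) (κ : CTy0) (t s : Comp Γ κ),
    RC Γ κ t s → RC Δ κ (substC σ t) (substC σ s)
  step : ∀ Γ κ (t s : Comp Γ κ), RC Γ κ t s →
    ∀ t', CStep t t' → ∃ s', CSteps s s' ∧ RC Γ κ t' s'
  star : ∀ Γ (s : Val Γ .unit), RV Γ .unit .star s → s = .star
  thunk : ∀ Γ κ (t' : Comp Γ κ) (s : Val Γ (.U κ)),
    RV Γ (.U κ) (.thunk t') s → ∃ s', s = .thunk s' ∧ RC Γ κ t' s'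
  inl : ∀ Γ φ₁ φ₂ (v : Val Γ φ₁) (s : Val Γ (.sum φ₁ φ₂)),
    RV Γ (.sum φ₁ φ₂) (.inl v) s → ∃ w, s = .inl w ∧ RV Γ φ₁ v w
  inr : ∀ Γ φ₁ φ₂ (v : Val Γ φ₂) (s : Val Γ (.sum φ₁ φ₂)),
    RV Γ (.sum φ₁ φ₂) (.inr v) s → ∃ w, s = .inr w ∧ RV Γ φ₂ v w
  pairV : ∀ Γ φ₁ φ₂ (v₁ : Val Γ φ₁) (v₂ : Val Γ φ₂) (s : Val Γ (.prod φ₁ φ₂)),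
    RV Γ (.prod φ₁ φ₂) (.pair v₁ v₂) s →
    ∃ w₁ w₂, s = .pair w₁ w₂ ∧ RV Γ φ₁ v₁ w₁ ∧ RV Γ φ₂ v₂ w₂
  pairC : ∀ Γ κ₁ κ₂ (t₁ : Comp Γ κ₁) (t₂ : Comp Γ κ₂) (s : Comp Γ (.tensor κ₁ κ₂)),
    RC Γ (.tensor κ₁ κ₂) (.pair t₁ t₂) s →
    ∃ s₁ s₂, CSteps s (.pair s₁ s₂) ∧ RC Γ κ₁ t₁ s₁ ∧ RC Γ κ₂ t₂ s₂
  fold : ∀ Γ (κ : CTy 1) (t' : Comp Γ (substMu κ)) (s : Comp Γ (.mu κ)),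
    RC Γ (.mu κ) (.fold t') s →
    ∃ s', CSteps s (.fold s') ∧ RC Γ (substMu κ) t' s'
  lam : ∀ Γ φ κ (M : Comp (φ :: Γ) κ) (s : Comp Γ (.arr φ κ)),
    RC Γ (.arr φ κ) (.lam M) s →
    ∃ N, CSteps s (.lam N) ∧ ∀ v : Val Γ φ, RC Γ κ (subst1 M v) (subst1 N v)
  ret : ∀ Γ φ (v : Val Γ φ) (s : Comp Γ (.F φ)),
    RC Γ (.F φ) (.ret v) s → ∃ w, CSteps s (.ret w) ∧ RV Γ φ v w

/-- Applicative similarity on values: the union of all applicative simulations. -/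
def AppLeV (Γ : Cx) (φ : VTy0) (v w : Val Γ φ) : Prop :=
  ∃ RV RC, IsSim RV RC ∧ RV Γ φ v w

/-- Applicative similarity on computations. -/
def AppLeC (Γ : Cx) (κ : CTy0) (t s : Comp Γ κ) : Prop :=
  ∃ RV RC, IsSim RV RC ∧ RC Γ κ t s

/-- Shape clauses of the logical relation, value sort. -/
def shapeV (LV : VRel) (LC : CRel) : ∀ (Γ : Cx) (φ : VTy0), Val Γ φ → Val Γ φ → Prop
  | _, _, .var _, _ => True
  | _, _, .star, s => s = .star
  | Γ, _, .inl (φ₁ := φ₁) v, s => ∃ w, s = .inl w ∧ LV Γ φ₁ v w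
  | Γ, _, .inr (φ₂ := φ₂) v, s => ∃ w, s = .inr w ∧ LV Γ φ₂ v w
  | Γ, _, .pair (φ₁ := φ₁) (φ₂ := φ₂) v₁ v₂, s =>
      ∃ w₁ w₂, s = .pair w₁ w₂ ∧ LV Γ φ₁ v₁ w₁ ∧ LV Γ φ₂ v₂ w₂
  | Γ, _, .thunk (κ := κ) t, s => ∃ s', s = .thunk s' ∧ LC Γ κ t s'

/-- Shape clauses of the logical relation, computation sort. -/
def shapeC (LV : VRel) (LC : CRel) : ∀ (Γ : Cx) (κ : CTy0), Comp Γ κ → Comp Γ κ → Prop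
  | Γ, _, .ret (φ := φ) v, s => ∃ w, CSteps s (.ret w) ∧ LV Γ φ v w
  | Γ, _, .pair (κ₁ := κ₁) (κ₂ := κ₂) t₁ t₂, s =>
      ∃ s₁ s₂, CSteps s (.pair s₁ s₂) ∧ LC Γ κ₁ t₁ s₁ ∧ LC Γ κ₂ t₂ s₂
  | Γ, _, .fold (κ := κ) t, s => ∃ s', CSteps s (.fold s') ∧ LC Γ (substMu κ) t s'
  | Γ, _, .lam (φ := φ) (κ := κ) M, s =>
      ∃ N, CSteps s (.lam N) ∧
        ∀ (v w : Val Γ φ), LV Γ φ v w → LC Γ κ (subst1 M v) (subst1 N w)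
  | _, _, .force _, _ => True
  | _, _, .app _ _, _ => True
  | _, _, .unfold _, _ => True
  | _, _, .choice _ _, _ => True
  | _, _, .seq _ _, _ => True
  | _, _, .case _ _ _, _ => True
  | _, _, .fst _, _ => True
  | _, _, .snd _, _ => True
  | _, _, .pm _ _, _ => True

/-- The one-step operator on sorted relations defining the logical relation, value sort. -/
def PhiV (LV : VRel) (LC : CRel) : VRel := fun Γ φ t s =>
  (∀ (Δ : Cx) (σ σ' : Sub Γ Δ), (∀ ψ (x : Var Γ ψ), LV Δ ψ (σ ψ x) (σ' ψ x)) →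
      LV Δ φ (CBPV.substV σ t) (CBPV.substV σ' s)) ∧
  shapeV LV LC Γ φ t s

/-- The one-step operator on sorted relations defining the logical relation, computation sort. -/
def PhiC (LV : VRel) (LC : CRel) : CRel := fun Γ κ t s =>
  (∀ (Δ : Cx) (σ σ' : Sub Γ Δ), (∀ ψ (x : Var Γ ψ), LV Δ ψ (σ ψ x) (σ' ψ x)) →
      LC Δ κ (CBPV.substC σ t) (CBPV.substC σ' s)) ∧
  (∀ t', CStep t t' → ∃ s', CSteps s s' ∧ LC Γ κ t' s') ∧
  shapeC LV LC Γ κ t s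

/-- The ordinal-indexed approximations `L^α` of the logical relation. -/
noncomputable def LOrd (α : Ordinal.{0}) : VRel × CRel :=
  Ordinal.limitRecOn α
    (fun _ _ _ _ => True, fun _ _ _ _ => True)
    (fun _ ih => (PhiV ih.1 ih.2, PhiC ih.1 ih.2))
    (fun α _ ih =>
      (fun Γ φ v w => ∀ β (h : β < α), (ih β h).1 Γ φ v w,
       fun Γ κ t s => ∀ β (h : β < α), (ih β h).2 Γ κ t s))

/-- The step-indexed logical relation `L = ⋂_α L^α`, value sort. -/
def LRelV (Γ : Cx) (φ : VTy0) (v w : Val Γ φ) : Prop := ∀ α : Ordinal.{0}, (LOrd α).1 Γ φ v w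

/-- The step-indexed logical relation `L = ⋂_α L^α`, computation sort. -/
def LRelC (Γ : Cx) (κ : CTy0) (t s : Comp Γ κ) : Prop := ∀ α : Ordinal.{0}, (LOrd α).2 Γ κ t s
end CBPV

namespace CBPV

mutual
/-- Size of values. -/
def vsize : ∀ {Γ : Cx} {φ : VTy0}, Val Γ φ → ℕ
  | _, _, .var _ => 1
  | _, _, .star => 1
  | _, _, .inl v => vsize v + 1
  | _, _, .inr v => vsize v + 1
  | _, _, .pair v w => vsize v + vsize w + 1
  | _, _, .thunk t => csize t + 1
/-- Size of computations. -/
def csize : ∀ {Γ : Cx} {κ : CTy0}, Comp Γ κ → ℕ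
  | _, _, .ret v => vsize v + 1
  | _, _, .force v => vsize v + 1
  | _, _, .app t v => csize t + vsize v + 1
  | _, _, .lam t => csize t + 1
  | _, _, .fold t => csize t + 1
  | _, _, .unfold t => csize t + 1
  | _, _, .choice t s => csize t + csize s + 1
  | _, _, .seq s t => csize s + csize t + 1
  | _, _, .case v s r => vsize v + csize s + csize r + 1
  | _, _, .fst t => csize t + 1
  | _, _, .snd t => csize t + 1
  | _, _, .pair t s => csize t + csize s + 1
  | _, _, .pm v t => vsize v + csize t + 1
end

mutual
/-- Eta-expansion congruence on values. -/
inductive EtaV : ∀ (Γ : Cx) (φ : VTy0), Val Γ φ → Val Γ φ → Prop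
  | var {Γ φ} (x : Var Γ φ) : EtaV Γ φ (.var x) (.var x)
  | star {Γ} : EtaV Γ .unit .star .star
  | inl {Γ φ₁ φ₂} {v w : Val Γ φ₁} : EtaV Γ φ₁ v w → EtaV Γ (.sum φ₁ φ₂) (.inl v) (.inl w)
  | inr {Γ φ₁ φ₂} {v w : Val Γ φ₂} : EtaV Γ φ₂ v w → EtaV Γ (.sum φ₁ φ₂) (.inr v) (.inr w)
  | pair {Γ φ₁ φ₂} {v₁ w₁ : Val Γ φ₁} {v₂ w₂ : Val Γ φ₂} :
      EtaV Γ φ₁ v₁ w₁ → EtaV Γ φ₂ v₂ w₂ →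
      EtaV Γ (.prod φ₁ φ₂) (.pair v₁ v₂) (.pair w₁ w₂)
  | thunk {Γ κ} {t s : Comp Γ κ} : EtaC Γ κ t s → EtaV Γ (.U κ) (.thunk t) (.thunk s)
  | eta {Γ κ} {v w : Val Γ (.U κ)} : EtaV Γ (.U κ) v w →
      EtaV Γ (.U κ) v (.thunk (.force w))
/-- Eta-expansion congruence on computations. -/
inductive EtaC : ∀ (Γ : Cx) (κ : CTy0), Comp Γ κ → Comp Γ κ → Prop
  | ret {Γ φ} {v w : Val Γ φ} : EtaV Γ φ v w → EtaC Γ (.F φ) (.ret v) (.ret w)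
  | force {Γ κ} {v w : Val Γ (.U κ)} : EtaV Γ (.U κ) v w → EtaC Γ κ (.force v) (.force w)
  | app {Γ φ κ} {t s : Comp Γ (.arr φ κ)} {v w : Val Γ φ} :
      EtaC Γ (.arr φ κ) t s → EtaV Γ φ v w → EtaC Γ κ (.app t v) (.app s w)
  | lam {Γ φ κ} {M N : Comp (φ :: Γ) κ} :
      EtaC (φ :: Γ) κ M N → EtaC Γ (.arr φ κ) (.lam M) (.lam N)
  | fold {Γ} {κ : CTy 1} {t s : Comp Γ (substMu κ)} :
      EtaC Γ (substMu κ) t s → EtaC Γ (.mu κ) (.fold t) (.fold s)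
  | unfold {Γ} {κ : CTy 1} {t s : Comp Γ (.mu κ)} :
      EtaC Γ (.mu κ) t s → EtaC Γ (substMu κ) (.unfold t) (.unfold s)
  | choice {Γ κ} {t s t' s' : Comp Γ κ} :
      EtaC Γ κ t s → EtaC Γ κ t' s' → EtaC Γ κ (.choice t t') (.choice s s')
  | seq {Γ φ κ} {s s' : Comp Γ (.F φ)} {t t' : Comp (φ :: Γ) κ} :
      EtaC Γ (.F φ) s s' → EtaC (φ :: Γ) κ t t' → EtaC Γ κ (.seq s t) (.seq s' t')
  | case {Γ φ₁ φ₂ κ} {v w : Val Γ (.sum φ₁ φ₂)}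
      {s s' : Comp (φ₁ :: Γ) κ} {r r' : Comp (φ₂ :: Γ) κ} :
      EtaV Γ (.sum φ₁ φ₂) v w → EtaC (φ₁ :: Γ) κ s s' → EtaC (φ₂ :: Γ) κ r r' →
      EtaC Γ κ (.case v s r) (.case w s' r')
  | fst {Γ κ₁ κ₂} {t s : Comp Γ (.tensor κ₁ κ₂)} :
      EtaC Γ (.tensor κ₁ κ₂) t s → EtaC Γ κ₁ (.fst t) (.fst s)
  | snd {Γ κ₁ κ₂} {t s : Comp Γ (.tensor κ₁ κ₂)} :
      EtaC Γ (.tensor κ₁ κ₂) t s → EtaC Γ κ₂ (.snd t) (.snd s)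
  | pairC {Γ κ₁ κ₂} {t₁ s₁ : Comp Γ κ₁} {t₂ s₂ : Comp Γ κ₂} :
      EtaC Γ κ₁ t₁ s₁ → EtaC Γ κ₂ t₂ s₂ →
      EtaC Γ (.tensor κ₁ κ₂) (.pair t₁ t₂) (.pair s₁ s₂)
  | pm {Γ φ₁ φ₂ κ} {v w : Val Γ (.prod φ₁ φ₂)} {t s : Comp (φ₁ :: φ₂ :: Γ) κ} :
      EtaV Γ (.prod φ₁ φ₂) v w → EtaC (φ₁ :: φ₂ :: Γ) κ t s →
      EtaC Γ κ (.pm v t) (.pm w s)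
end

mutual
def etaReflV : ∀ {Γ : Cx} {φ : VTy0} (v : Val Γ φ), EtaV Γ φ v v
  | _, _, .var x => .var x
  | _, _, .star => .star
  | _, _, .inl v => .inl (etaReflV v)
  | _, _, .inr v => .inr (etaReflV v)
  | _, _, .pair v w => .pair (etaReflV v) (etaReflV w)
  | _, _, .thunk t => .thunk (etaReflC t)
def etaReflC : ∀ {Γ : Cx} {κ : CTy0} (t : Comp Γ κ), EtaC Γ κ t t
  | _, _, .ret v => .ret (etaReflV v)
  | _, _, .force v => .force (etaReflV v)
  | _, _, .app t v => .app (etaReflC t) (etaReflV v)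
  | _, _, .lam t => .lam (etaReflC t)
  | _, _, .fold t => .fold (etaReflC t)
  | _, _, .unfold t => .unfold (etaReflC t)
  | _, _, .choice t s => .choice (etaReflC t) (etaReflC s)
  | _, _, .seq s t => .seq (etaReflC s) (etaReflC t)
  | _, _, .case v s r => .case (etaReflV v) (etaReflC s) (etaReflC r)
  | _, _, .fst t => .fst (etaReflC t)
  | _, _, .snd t => .snd (etaReflC t)
  | _, _, .pair t s => .pairC (etaReflC t) (etaReflC s)
  | _, _, .pm v t => .pm (etaReflV v) (etaReflC t)
end

end CBPV
namespace CBPV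

/-- Multi-step congruence for application. -/
theorem stepsApp {Γ : Cx} {φ : VTy0} {κ : CTy0} {t t' : Comp Γ (.arr φ κ)} (v : Val Γ φ)
    (h : CSteps t t') : CSteps (.app t v) (.app t' v) :=
  Relation.ReflTransGen.lift (fun x => Comp.app x v) (fun _ _ hs => CStep.app_cong v hs) _ _ h

theorem stepsFst {Γ : Cx} {κ₁ κ₂ : CTy0} {t t' : Comp Γ (.tensor κ₁ κ₂)}
    (h : CSteps t t') : CSteps (.fst t) (.fst t') :=
  Relation.ReflTransGen.lift Comp.fst (fun _ _ hs => CStep.fst_cong hs) _ _ h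

theorem stepsSnd {Γ : Cx} {κ₁ κ₂ : CTy0} {t t' : Comp Γ (.tensor κ₁ κ₂)}
    (h : CSteps t t') : CSteps (.snd t) (.snd t') :=
  Relation.ReflTransGen.lift Comp.snd (fun _ _ hs => CStep.snd_cong hs) _ _ h

theorem stepsSeq {Γ : Cx} {φ : VTy0} {κ : CTy0} {s s' : Comp Γ (.F φ)}
    (t : Comp (φ :: Γ) κ) (h : CSteps s s') : CSteps (.seq s t) (.seq s' t) :=
  Relation.ReflTransGen.lift (fun x => Comp.seq x t) (fun _ _ hs => CStep.seq_cong t hs) _ _ h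

/-- Renaming compatibility of the eta relation. -/
theorem etaRenameAux : ∀ n : ℕ,
    (∀ (Γ Δ : Cx) (r : Ren Γ Δ) (φ : VTy0) (v w : Val Γ φ), vsize w ≤ n → EtaV Γ φ v w →
       EtaV Δ φ (renameV r v) (renameV r w)) ∧
    (∀ (Γ Δ : Cx) (r : Ren Γ Δ) (κ : CTy0) (t s : Comp Γ κ), csize s ≤ n → EtaC Γ κ t s →
       EtaC Δ κ (renameC r t) (renameC r s)) := by
  intro n
  induction n using Nat.strong_induction_on with
  | _ n ih =>
    have IHV : ∀ {Γ Δ : Cx} (r : Ren Γ Δ) {φ : VTy0} {v w : Val Γ φ}, vsize w < n →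
        EtaV Γ φ v w → EtaV Δ φ (renameV r v) (renameV r w) :=
      fun {Γ Δ} r {φ v w} hlt h => (ih _ hlt).1 _ _ r _ _ _ le_rfl h
    have IHC : ∀ {Γ Δ : Cx} (r : Ren Γ Δ) {κ : CTy0} {t s : Comp Γ κ}, csize s < n →
        EtaC Γ κ t s → EtaC Δ κ (renameC r t) (renameC r s) :=
      fun {Γ Δ} r {κ t s} hlt h => (ih _ hlt).2 _ _ r _ _ _ le_rfl h
    constructor
    · intro Γ Δ r φ v w hn h
      cases h with
      | var x => exact .var _
      | star => exact .star
      | inl h =>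
        simp only [vsize] at hn; simp only [renameV]
        exact .inl (IHV r (by omega) h)
      | inr h =>
        simp only [vsize] at hn; simp only [renameV]
        exact .inr (IHV r (by omega) h)
      | pair h₁ h₂ =>
        simp only [vsize] at hn; simp only [renameV]
        exact .pair (IHV r (by omega) h₁) (IHV r (by omega) h₂)
      | thunk h =>
        simp only [vsize] at hn; simp only [renameV]
        exact .thunk (IHC r (by omega) h)
      | eta h =>
        simp only [vsize, csize] at hn; simp only [renameV, renameC]
        exact .eta (IHV r (by omega) h)
    · intro Γ Δ r κ t s hn h
      cases h with
      | ret h =>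
        simp only [csize] at hn; simp only [renameC]
        exact .ret (IHV r (by omega) h)
      | force h =>
        simp only [csize] at hn; simp only [renameC]
        exact .force (IHV r (by omega) h)
      | app h hv =>
        simp only [csize] at hn; simp only [renameC]
        exact .app (IHC r (by omega) h) (IHV r (by omega) hv)
      | lam h =>
        simp only [csize] at hn; simp only [renameC]
        exact .lam (IHC r.lift (by omega) h)
      | fold h =>
        simp only [csize] at hn; simp only [renameC]
        exact .fold (IHC r (by omega) h)
      | unfold h =>
        simp only [csize] at hn; simp only [renameC]
        exact .unfold (IHC r (by omega) h)
      | choice h₁ h₂ =>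
        simp only [csize] at hn; simp only [renameC]
        exact .choice (IHC r (by omega) h₁) (IHC r (by omega) h₂)
      | seq h₁ h₂ =>
        simp only [csize] at hn; simp only [renameC]
        exact .seq (IHC r (by omega) h₁) (IHC r.lift (by omega) h₂)
      | case hv h₁ h₂ =>
        simp only [csize] at hn; simp only [renameC]
        exact .case (IHV r (by omega) hv) (IHC r.lift (by omega) h₁) (IHC r.lift (by omega) h₂)
      | fst h =>
        simp only [csize] at hn; simp only [renameC]
        exact .fst (IHC r (by omega) h)
      | snd h =>
        simp only [csize] at hn; simp only [renameC]
        exact .snd (IHC r (by omega) h)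
      | pairC h₁ h₂ =>
        simp only [csize] at hn; simp only [renameC]
        exact .pairC (IHC r (by omega) h₁) (IHC r (by omega) h₂)
      | pm hv h =>
        simp only [csize] at hn; simp only [renameC]
        exact .pm (IHV r (by omega) hv) (IHC r.lift.lift (by omega) h)

theorem etaRenameV {Γ Δ : Cx} (r : Ren Γ Δ) {φ : VTy0} {v w : Val Γ φ}
    (h : EtaV Γ φ v w) : EtaV Δ φ (renameV r v) (renameV r w) :=
  (etaRenameAux (vsize w)).1 _ _ r _ _ _ le_rfl h

theorem etaRenameC {Γ Δ : Cx} (r : Ren Γ Δ) {κ : CTy0} {t s : Comp Γ κ}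
    (h : EtaC Γ κ t s) : EtaC Δ κ (renameC r t) (renameC r s) :=
  (etaRenameAux (csize s)).2 _ _ r _ _ _ le_rfl h

theorem etaWk {Γ : Cx} {φ ψ : VTy0} {v w : Val Γ φ} (h : EtaV Γ φ v w) :
    EtaV (ψ :: Γ) φ (wkV v) (wkV w) := etaRenameV _ h

theorem etaLiftSub {Γ Δ : Cx} {σ σ' : Sub Γ Δ}
    (hσ : ∀ ψ x, EtaV Δ ψ (σ ψ x) (σ' ψ x)) (φ : VTy0) :
    ∀ ψ x, EtaV (φ :: Δ) ψ (Sub.lift σ ψ x) (Sub.lift σ' ψ x) := by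
  intro ψ x
  cases x with
  | vz => exact .var _
  | vs y => exact etaRenameV _ (hσ ψ y)

/-- Substitution compatibility of the eta relation. -/
theorem etaSubstAux : ∀ n : ℕ,
    (∀ (Γ Δ : Cx) (σ σ' : Sub Γ Δ), (∀ ψ x, EtaV Δ ψ (σ ψ x) (σ' ψ x)) →
       ∀ (φ : VTy0) (v w : Val Γ φ), vsize w ≤ n → EtaV Γ φ v w →
       EtaV Δ φ (substV σ v) (substV σ' w)) ∧
    (∀ (Γ Δ : Cx) (σ σ' : Sub Γ Δ), (∀ ψ x, EtaV Δ ψ (σ ψ x) (σ' ψ x)) →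
       ∀ (κ : CTy0) (t s : Comp Γ κ), csize s ≤ n → EtaC Γ κ t s →
       EtaC Δ κ (substC σ t) (substC σ' s)) := by
  intro n
  induction n using Nat.strong_induction_on with
  | _ n ih =>
    have IHV : ∀ {Γ Δ : Cx} {σ σ' : Sub Γ Δ}, (∀ ψ x, EtaV Δ ψ (σ ψ x) (σ' ψ x)) →
        ∀ {φ : VTy0} {v w : Val Γ φ}, vsize w < n → EtaV Γ φ v w →
        EtaV Δ φ (substV σ v) (substV σ' w) :=
      fun {Γ Δ σ σ'} hσ {φ v w} hlt h => (ih _ hlt).1 _ _ _ _ hσ _ _ _ le_rfl h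
    have IHC : ∀ {Γ Δ : Cx} {σ σ' : Sub Γ Δ}, (∀ ψ x, EtaV Δ ψ (σ ψ x) (σ' ψ x)) →
        ∀ {κ : CTy0} {t s : Comp Γ κ}, csize s < n → EtaC Γ κ t s →
        EtaC Δ κ (substC σ t) (substC σ' s) :=
      fun {Γ Δ σ σ'} hσ {κ t s} hlt h => (ih _ hlt).2 _ _ _ _ hσ _ _ _ le_rfl h
    constructor
    · intro Γ Δ σ σ' hσ φ v w hn h
      cases h with
      | var x => exact hσ _ x
      | star => exact .star
      | inl h =>
        simp only [vsize] at hn; simp only [substV]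
        exact .inl (IHV hσ (by omega) h)
      | inr h =>
        simp only [vsize] at hn; simp only [substV]
        exact .inr (IHV hσ (by omega) h)
      | pair h₁ h₂ =>
        simp only [vsize] at hn; simp only [substV]
        exact .pair (IHV hσ (by omega) h₁) (IHV hσ (by omega) h₂)
      | thunk h =>
        simp only [vsize] at hn; simp only [substV]
        exact .thunk (IHC hσ (by omega) h)
      | eta h =>
        simp only [vsize, csize] at hn; simp only [substV, substC]
        exact .eta (IHV hσ (by omega) h)
    · intro Γ Δ σ σ' hσ κ t s hn h
      cases h with
      | ret h =>
        simp only [csize] at hn; simp only [substC]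
        exact .ret (IHV hσ (by omega) h)
      | force h =>
        simp only [csize] at hn; simp only [substC]
        exact .force (IHV hσ (by omega) h)
      | app h hv =>
        simp only [csize] at hn; simp only [substC]
        exact .app (IHC hσ (by omega) h) (IHV hσ (by omega) hv)
      | lam h =>
        simp only [csize] at hn; simp only [substC]
        exact .lam (IHC (etaLiftSub hσ _) (by omega) h)
      | fold h =>
        simp only [csize] at hn; simp only [substC]
        exact .fold (IHC hσ (by omega) h)
      | unfold h =>
        simp only [csize] at hn; simp only [substC]
        exact .unfold (IHC hσ (by omega) h)
      | choice h₁ h₂ =>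
        simp only [csize] at hn; simp only [substC]
        exact .choice (IHC hσ (by omega) h₁) (IHC hσ (by omega) h₂)
      | seq h₁ h₂ =>
        simp only [csize] at hn; simp only [substC]
        exact .seq (IHC hσ (by omega) h₁) (IHC (etaLiftSub hσ _) (by omega) h₂)
      | case hv h₁ h₂ =>
        simp only [csize] at hn; simp only [substC]
        exact .case (IHV hσ (by omega) hv) (IHC (etaLiftSub hσ _) (by omega) h₁)
          (IHC (etaLiftSub hσ _) (by omega) h₂)
      | fst h =>
        simp only [csize] at hn; simp only [substC]
        exact .fst (IHC hσ (by omega) h)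
      | snd h =>
        simp only [csize] at hn; simp only [substC]
        exact .snd (IHC hσ (by omega) h)
      | pairC h₁ h₂ =>
        simp only [csize] at hn; simp only [substC]
        exact .pairC (IHC hσ (by omega) h₁) (IHC hσ (by omega) h₂)
      | pm hv h =>
        simp only [csize] at hn; simp only [substC]
        exact .pm (IHV hσ (by omega) hv) (IHC (etaLiftSub (etaLiftSub hσ _) _) (by omega) h)

theorem etaSub1 {Γ : Cx} {φ : VTy0} {v w : Val Γ φ} (h : EtaV Γ φ v w) :
    ∀ ψ x, EtaV Γ ψ (sub1 v ψ x) (sub1 w ψ x) := by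
  intro ψ x
  cases x with
  | vz => exact h
  | vs y => exact .var _

theorem etaSubst1 {Γ : Cx} {φ : VTy0} {κ : CTy0} {M N : Comp (φ :: Γ) κ} {v w : Val Γ φ}
    (hMN : EtaC (φ :: Γ) κ M N) (hvw : EtaV Γ φ v w) :
    EtaC Γ κ (subst1 M v) (subst1 N w) :=
  (etaSubstAux (csize N)).2 _ _ _ _ (etaSub1 hvw) _ _ _ le_rfl hMN

end CBPV
namespace CBPV

/-- No-step predicate. -/
def NoStep {Γ : Cx} {κ : CTy0} (t : Comp Γ κ) : Prop := ∀ u, ¬ CStep t u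

def IsUnfold : ∀ {Γ : Cx} {κ : CTy0}, Comp Γ κ → Prop
  | _, _, .unfold _ => True
  | _, _, _ => False

theorem nostepOfUnfold {Γ : Cx} {κ : CTy0} {a b : Comp Γ κ} (h : CStep a b) :
    ¬ IsUnfold a := by
  cases h <;> simp [IsUnfold]

theorem nostepRet {Γ : Cx} {φ : VTy0} (v : Val Γ φ) : NoStep (.ret v) := fun _ h => nomatch h
theorem nostepLam {Γ : Cx} {φ : VTy0} {κ : CTy0} (M : Comp (φ :: Γ) κ) :
    NoStep (.lam M) := fun _ h => nomatch h
theorem nostepPairC {Γ : Cx} {κ₁ κ₂ : CTy0} (t : Comp Γ κ₁) (s : Comp Γ κ₂) :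
    NoStep (.pair t s) := fun _ h => nomatch h
theorem nostepUnfold {Γ : Cx} {κ : CTy 1} (t : Comp Γ (.mu κ)) :
    NoStep (.unfold t) := fun _ h => nostepOfUnfold h (by simp [IsUnfold])
theorem nostepForceVar {Γ : Cx} {κ : CTy0} (x : Var Γ (.U κ)) :
    NoStep (.force (.var x)) := fun _ h => nomatch h
theorem nostepCaseVar {Γ : Cx} {φ₁ φ₂ : VTy0} {κ : CTy0} (x : Var Γ (.sum φ₁ φ₂))
    (a : Comp (φ₁ :: Γ) κ) (b : Comp (φ₂ :: Γ) κ) :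
    NoStep (.case (.var x) a b) := fun _ h => nomatch h
theorem nostepPmVar {Γ : Cx} {φ₁ φ₂ : VTy0} {κ : CTy0} (x : Var Γ (.prod φ₁ φ₂))
    (t : Comp (φ₁ :: φ₂ :: Γ) κ) :
    NoStep (.pm (.var x) t) := fun _ h => nomatch h

theorem nostepSeq {Γ : Cx} {φ : VTy0} {κ : CTy0} {s : Comp Γ (.F φ)}
    (hs : NoStep s) (t : Comp (φ :: Γ) κ) : NoStep (.seq s t) := by
  intro u hu
  cases hu with
  | seq_cong _ h => exact hs _ h
  | seq_ret _ h => exact hs _ h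

/-- Shape inversion for `EtaC`, keyed on the left term. -/
def EtaShape : ∀ (Γ : Cx) (κ : CTy0), Comp Γ κ → Comp Γ κ → Prop
  | Γ, _, .ret (φ := φ) v, s => ∃ w, s = .ret w ∧ EtaV Γ φ v w
  | Γ, _, .force (κ := κ) v, s => ∃ w, s = .force w ∧ EtaV Γ (.U κ) v w
  | Γ, _, .app (φ := φ) (κ := κ) t v, s =>
      ∃ t' w, s = .app t' w ∧ EtaC Γ (.arr φ κ) t t' ∧ EtaV Γ φ v w
  | Γ, _, .lam (φ := φ) (κ := κ) M, s => ∃ N, s = .lam N ∧ EtaC (φ :: Γ) κ M N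
  | Γ, _, .fold (κ := κ) t, s => ∃ t', s = .fold t' ∧ EtaC Γ (substMu κ) t t'
  | Γ, _, .unfold (κ := κ) t, s => ∃ t', s = .unfold t' ∧ EtaC Γ (.mu κ) t t'
  | Γ, κ, .choice t u, s => ∃ t' u', s = .choice t' u' ∧ EtaC Γ κ t t' ∧ EtaC Γ κ u u'
  | Γ, κ, .seq (φ := φ) t u, s =>
      ∃ t' u', s = .seq t' u' ∧ EtaC Γ (.F φ) t t' ∧ EtaC (φ :: Γ) κ u u'
  | Γ, κ, .case (φ₁ := φ₁) (φ₂ := φ₂) v a b, s =>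
      ∃ w a' b', s = .case w a' b' ∧ EtaV Γ (.sum φ₁ φ₂) v w ∧
        EtaC (φ₁ :: Γ) κ a a' ∧ EtaC (φ₂ :: Γ) κ b b'
  | Γ, _, .fst (κ₁ := κ₁) (κ₂ := κ₂) t, s => ∃ t', s = .fst t' ∧ EtaC Γ (.tensor κ₁ κ₂) t t'
  | Γ, _, .snd (κ₁ := κ₁) (κ₂ := κ₂) t, s => ∃ t', s = .snd t' ∧ EtaC Γ (.tensor κ₁ κ₂) t t'
  | Γ, _, .pair (κ₁ := κ₁) (κ₂ := κ₂) t u, s =>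
      ∃ t' u', s = .pair t' u' ∧ EtaC Γ κ₁ t t' ∧ EtaC Γ κ₂ u u'
  | Γ, κ, .pm (φ₁ := φ₁) (φ₂ := φ₂) v t, s =>
      ∃ w t', s = .pm w t' ∧ EtaV Γ (.prod φ₁ φ₂) v w ∧ EtaC (φ₁ :: φ₂ :: Γ) κ t t'

theorem etaShape {Γ : Cx} {κ : CTy0} {t s : Comp Γ κ} (h : EtaC Γ κ t s) :
    EtaShape Γ κ t s := by
  cases h <;> simp only [EtaShape] <;>
    first
    | exact ⟨_, rfl, by assumption⟩
    | exact ⟨_, _, rfl, by assumption, by assumption⟩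
    | exact ⟨_, _, _, rfl, by assumption, by assumption, by assumption⟩

/-- Shape inversion for `EtaC`, keyed on the right term (only the cases we need). -/
def EtaShapeR : ∀ (Γ : Cx) (κ : CTy0), Comp Γ κ → Comp Γ κ → Prop
  | _, _, t, .lam _ => ∃ M, t = .lam M
  | _, _, t, .pair _ _ => ∃ a b, t = .pair a b
  | _, _, t, .unfold _ => ∃ a, t = .unfold a
  | _, _, _, _ => True

theorem etaShapeR {Γ : Cx} {κ : CTy0} {t s : Comp Γ κ} (h : EtaC Γ κ t s) :
    EtaShapeR Γ κ t s := by
  cases h <;> simp only [EtaShapeR] <;>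
    first
    | trivial
    | exact ⟨_, rfl⟩
    | exact ⟨_, _, rfl⟩

/-- Simulation of a `force_thunk` step through eta-expansion. -/
theorem forceEtaAux : ∀ n : ℕ, ∀ (Γ : Cx) (κ : CTy0) (t₀ : Comp Γ κ) (v : Val Γ (.U κ)),
    vsize v ≤ n → EtaV Γ (.U κ) (.thunk t₀) v →
    ∃ s', CSteps (.force v) s' ∧ EtaC Γ κ t₀ s' := by
  intro n
  induction n using Nat.strong_induction_on with
  | _ n ih =>
    intro Γ κ t₀ v hn h
    cases h with
    | thunk h => exact ⟨_, .single (.force_thunk _), h⟩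
    | eta h =>
      simp only [vsize, csize] at hn
      obtain ⟨s', hs, he⟩ := ih _ (by omega) Γ κ t₀ _ le_rfl h
      exact ⟨s', Relation.ReflTransGen.head (.force_thunk _) hs, he⟩

theorem forceEta {Γ : Cx} {κ : CTy0} {t₀ : Comp Γ κ} {v : Val Γ (.U κ)}
    (h : EtaV Γ (.U κ) (.thunk t₀) v) :
    ∃ s', CSteps (.force v) s' ∧ EtaC Γ κ t₀ s' :=
  forceEtaAux (vsize v) Γ κ t₀ v le_rfl h

/-- One-step simulation: either the step can be matched, or the right-hand side
reaches a stuck term still related to the original. -/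
theorem stepEta {Γ : Cx} {κ : CTy0} {t t' : Comp Γ κ} (hs : CStep t t') :
    ∀ s, EtaC Γ κ t s →
      ∃ s', CSteps s s' ∧ (EtaC Γ κ t' s' ∨ (NoStep s' ∧ EtaC Γ κ t s')) := by
  induction hs with
  | fold_unfold u =>
    intro s h
    obtain ⟨s₁, rfl, h1⟩ := etaShape h
    obtain ⟨s₂, rfl, h2⟩ := etaShape h1
    exact ⟨_, .single (.fold_unfold _), .inl h2⟩
  | app_cong v hst ih =>
    intro s h
    obtain ⟨s₁, w, rfl, h1, hv⟩ := etaShape h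
    obtain ⟨u, st, hc⟩ := ih _ h1
    rcases hc with he | ⟨hnu, he⟩
    · exact ⟨_, stepsApp _ st, .inl (.app he hv)⟩
    · refine ⟨_, stepsApp _ st, .inr ⟨?_, .app he hv⟩⟩
      intro x hx
      cases hx with
      | app_cong _ h' => exact hnu _ h'
      | app_beta M _ =>
        obtain ⟨M₀, rfl⟩ := etaShapeR he
        exact nomatch hst
  | app_beta M v =>
    intro s h
    obtain ⟨s₁, w, rfl, h1, hv⟩ := etaShape h
    obtain ⟨N, rfl, hM⟩ := etaShape h1
    exact ⟨_, .single (.app_beta _ _), .inl (etaSubst1 hM hv)⟩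
  | fst_cong hst ih =>
    intro s h
    obtain ⟨s₁, rfl, h1⟩ := etaShape h
    obtain ⟨u, st, hc⟩ := ih _ h1
    rcases hc with he | ⟨hnu, he⟩
    · exact ⟨_, stepsFst st, .inl (.fst he)⟩
    · refine ⟨_, stepsFst st, .inr ⟨?_, .fst he⟩⟩
      intro x hx
      cases hx with
      | fst_cong h' => exact hnu _ h'
      | fst_pair a b =>
        obtain ⟨a₀, b₀, rfl⟩ := etaShapeR he
        exact nomatch hst
  | snd_cong hst ih =>
    intro s h
    obtain ⟨s₁, rfl, h1⟩ := etaShape h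
    obtain ⟨u, st, hc⟩ := ih _ h1
    rcases hc with he | ⟨hnu, he⟩
    · exact ⟨_, stepsSnd st, .inl (.snd he)⟩
    · refine ⟨_, stepsSnd st, .inr ⟨?_, .snd he⟩⟩
      intro x hx
      cases hx with
      | snd_cong h' => exact hnu _ h'
      | snd_pair a b =>
        obtain ⟨a₀, b₀, rfl⟩ := etaShapeR he
        exact nomatch hst
  | fst_pair a b =>
    intro s h
    obtain ⟨s₁, rfl, h1⟩ := etaShape h
    obtain ⟨a', b', rfl, h2, h3⟩ := etaShape h1
    exact ⟨_, .single (.fst_pair _ _), .inl h2⟩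
  | snd_pair a b =>
    intro s h
    obtain ⟨s₁, rfl, h1⟩ := etaShape h
    obtain ⟨a', b', rfl, h2, h3⟩ := etaShape h1
    exact ⟨_, .single (.snd_pair _ _), .inl h3⟩
  | choice_l a b =>
    intro s h
    obtain ⟨a', b', rfl, h1, h2⟩ := etaShape h
    exact ⟨_, .single (.choice_l _ _), .inl h1⟩
  | choice_r a b =>
    intro s h
    obtain ⟨a', b', rfl, h1, h2⟩ := etaShape h
    exact ⟨_, .single (.choice_r _ _), .inl h2⟩
  | seq_cong t₂ hst ih =>
    intro s h
    obtain ⟨s₁, s₂, rfl, h1, h2⟩ := etaShape h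
    obtain ⟨u, st, hc⟩ := ih _ h1
    rcases hc with he | ⟨hnu, he⟩
    · exact ⟨_, stepsSeq _ st, .inl (.seq he h2)⟩
    · exact ⟨_, stepsSeq _ st, .inr ⟨nostepSeq hnu _, .seq he h2⟩⟩
  | seq_ret t₂ hst ih =>
    intro s h
    obtain ⟨s₁, s₂, rfl, h1, h2⟩ := etaShape h
    obtain ⟨u, st, hc⟩ := ih _ h1
    rcases hc with he | ⟨hnu, he⟩
    · obtain ⟨w, rfl, hv⟩ := etaShape he
      rcases st.cases_tail with heq | ⟨c, st1, hstep1⟩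
      · subst heq
        refine ⟨_, .refl, .inr ⟨?_, .seq h1 h2⟩⟩
        intro x hx
        cases hx with
        | seq_cong _ h' => exact nomatch h'
        | seq_ret _ h' => exact nomatch h'
      · exact ⟨_, (stepsSeq _ st1).tail (.seq_ret _ hstep1), .inl (.app (.lam h2) hv)⟩
    · exact ⟨_, stepsSeq _ st, .inr ⟨nostepSeq hnu _, .seq he h2⟩⟩
  | case_inl v a b =>
    intro s h
    obtain ⟨w, a', b', rfl, hv, h1, h2⟩ := etaShape h
    cases hv with | inl hv' =>
    exact ⟨_, .single (.case_inl _ _ _), .inl (.app (.lam h1) hv')⟩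
  | case_inr v a b =>
    intro s h
    obtain ⟨w, a', b', rfl, hv, h1, h2⟩ := etaShape h
    cases hv with | inr hv' =>
    exact ⟨_, .single (.case_inr _ _ _), .inl (.app (.lam h2) hv')⟩
  | force_thunk t₀ =>
    intro s h
    obtain ⟨w, rfl, hv⟩ := etaShape h
    obtain ⟨s', st, he⟩ := forceEta hv
    exact ⟨s', st, .inl he⟩
  | pm_pair v w t₀ =>
    intro s h
    obtain ⟨w', t₀', rfl, hv, h1⟩ := etaShape h
    cases hv with | pair hv1 hv2 =>
    exact ⟨_, .single (.pm_pair _ _ _),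
      .inl (.app (.lam (.app (.lam h1) (etaWk hv1))) hv2)⟩

end CBPV
namespace CBPV

/-- A stuck term is eta-related only to terms reducing to stuck terms. -/
theorem normalEtaAux : ∀ n : ℕ, ∀ (Γ : Cx) (κ : CTy0) (t s : Comp Γ κ),
    csize s ≤ n → EtaC Γ κ t s → NoStep t →
    ∃ s', CSteps s s' ∧ NoStep s' ∧ EtaC Γ κ t s' := by
  intro n
  induction n using Nat.strong_induction_on with
  | _ n ih =>
    intro Γ κ t s hn h hno
    cases h with
    | ret hv => exact ⟨_, .refl, nostepRet _, .ret hv⟩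
    | @force _ _ v w hv =>
      cases v with
      | thunk t₀ => exact absurd (CStep.force_thunk t₀) (hno _)
      | var x =>
        cases hv with
        | var => exact ⟨_, .refl, nostepForceVar x, .force (.var x)⟩
        | eta h' =>
          simp only [csize, vsize] at hn
          obtain ⟨n₁, st, hn₁, he₁⟩ :=
            ih _ (by simp only [csize]; omega) Γ κ _ _ le_rfl (EtaC.force h') hno
          exact ⟨n₁, Relation.ReflTransGen.head (.force_thunk _) st, hn₁, he₁⟩
    | @app _ _ _ t₁ s₁ v w h1 hv =>
      simp only [csize] at hn
      have hno1 : NoStep t₁ := fun u hu => hno _ (.app_cong v hu)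
      obtain ⟨n₁, st, hn₁, he₁⟩ := ih _ (by omega) _ _ _ _ le_rfl h1 hno1
      refine ⟨.app n₁ w, stepsApp _ st, ?_, .app he₁ hv⟩
      intro u hu
      cases hu with
      | app_cong _ h' => exact hn₁ _ h'
      | app_beta M _ =>
        obtain ⟨M₀, rfl⟩ := etaShapeR he₁
        exact hno _ (.app_beta M₀ v)
    | lam h1 => exact ⟨_, .refl, nostepLam _, .lam h1⟩
    | fold h1 =>
      refine ⟨_, .refl, ?_, .fold h1⟩
      intro u hu
      cases hu with
      | fold_unfold =>
        obtain ⟨a, rfl⟩ := etaShapeR h1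
        exact hno _ (.fold_unfold _)
    | unfold h1 => exact ⟨_, .refl, nostepUnfold _, .unfold h1⟩
    | choice h1 h2 => exact absurd (CStep.choice_l _ _) (hno _)
    | @seq _ _ _ t₁ s₁ t₂ s₂ h1 h2 =>
      simp only [csize] at hn
      have hno1 : NoStep t₁ := fun u hu => hno _ (.seq_cong _ hu)
      obtain ⟨n₁, st, hn₁, he₁⟩ := ih _ (by omega) _ _ _ _ le_rfl h1 hno1
      exact ⟨.seq n₁ s₂, stepsSeq _ st, nostepSeq hn₁ _, .seq he₁ h2⟩
    | @case _ _ _ _ v w a a' b b' hv h1 h2 =>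
      cases v with
      | var x =>
        cases hv with
        | var => exact ⟨_, .refl, nostepCaseVar x _ _, .case (.var x) h1 h2⟩
      | inl v₀ => exact absurd (CStep.case_inl v₀ _ _) (hno _)
      | inr v₀ => exact absurd (CStep.case_inr v₀ _ _) (hno _)
    | @fst _ _ _ t₁ s₁ h1 =>
      simp only [csize] at hn
      have hno1 : NoStep t₁ := fun u hu => hno _ (.fst_cong hu)
      obtain ⟨n₁, st, hn₁, he₁⟩ := ih _ (by omega) _ _ _ _ le_rfl h1 hno1
      refine ⟨.fst n₁, stepsFst st, ?_, .fst he₁⟩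
      intro u hu
      cases hu with
      | fst_cong h' => exact hn₁ _ h'
      | fst_pair a b =>
        obtain ⟨a₀, b₀, rfl⟩ := etaShapeR he₁
        exact hno _ (.fst_pair _ _)
    | @snd _ _ _ t₁ s₁ h1 =>
      simp only [csize] at hn
      have hno1 : NoStep t₁ := fun u hu => hno _ (.snd_cong hu)
      obtain ⟨n₁, st, hn₁, he₁⟩ := ih _ (by omega) _ _ _ _ le_rfl h1 hno1
      refine ⟨.snd n₁, stepsSnd st, ?_, .snd he₁⟩
      intro u hu
      cases hu with
      | snd_cong h' => exact hn₁ _ h'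
      | snd_pair a b =>
        obtain ⟨a₀, b₀, rfl⟩ := etaShapeR he₁
        exact hno _ (.snd_pair _ _)
    | pairC h1 h2 => exact ⟨_, .refl, nostepPairC _ _, .pairC h1 h2⟩
    | @pm _ _ _ _ v w t₁ s₁ hv h1 =>
      cases v with
      | var x =>
        cases hv with
        | var => exact ⟨_, .refl, nostepPmVar x _, .pm (.var x) h1⟩
      | pair v₀ w₀ => exact absurd (CStep.pm_pair v₀ w₀ _) (hno _)

theorem normalEta {Γ : Cx} {κ : CTy0} {t s : Comp Γ κ} (h : EtaC Γ κ t s)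
    (hno : NoStep t) : ∃ s', CSteps s s' ∧ NoStep s' ∧ EtaC Γ κ t s' :=
  normalEtaAux (csize s) Γ κ t s le_rfl h hno

/-- Eta-related terms have related may-convergence. -/
theorem convEta {Γ : Cx} {κ : CTy0} {t s : Comp Γ κ} (h : EtaC Γ κ t s)
    (hc : Conv t) : Conv s := by
  obtain ⟨nf, hsteps, hnorm⟩ := hc
  induction hsteps using Relation.ReflTransGen.head_induction_on generalizing s with
  | refl =>
    obtain ⟨s', h1, h2, _⟩ := normalEta h hnorm
    exact ⟨s', h1, h2⟩
  | head hstep _ ihs =>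
    obtain ⟨s', hs1, hcase⟩ := stepEta hstep _ h
    rcases hcase with he | ⟨hns, _⟩
    · obtain ⟨s'', hs2, hn2⟩ := ihs he
      exact ⟨s'', hs1.trans hs2, hn2⟩
    · exact ⟨s', hs1, hns⟩

/-- The eta relation is a congruence. -/
theorem etaIsCong : IsCong EtaV EtaC where
  rencompat := ⟨fun _ _ r _ _ _ h => etaRenameV r h, fun _ _ r _ _ _ h => etaRenameC r h⟩
  var := fun _ _ x => .var x
  star := fun _ => .star
  inl := fun _ _ _ _ _ h => .inl h
  inr := fun _ _ _ _ _ h => .inr h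
  pairV := fun _ _ _ _ _ _ _ h₁ h₂ => .pair h₁ h₂
  thunk := fun _ _ _ _ h => .thunk h
  ret := fun _ _ _ _ h => .ret h
  force := fun _ _ _ _ h => .force h
  app := fun _ _ _ _ _ _ _ h hv => .app h hv
  lam := fun _ _ _ _ _ h => .lam h
  fold := fun _ _ _ _ h => .fold h
  unfold := fun _ _ _ _ h => .unfold h
  choice := fun _ _ _ _ _ _ h₁ h₂ => .choice h₁ h₂
  seq := fun _ _ _ _ _ _ _ h₁ h₂ => .seq h₁ h₂
  case := fun _ _ _ _ _ _ _ _ _ _ hv h₁ h₂ => .case hv h₁ h₂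
  fst := fun _ _ _ _ _ h => .fst h
  snd := fun _ _ _ _ _ h => .snd h
  pairC := fun _ _ _ _ _ _ _ h₁ h₂ => .pairC h₁ h₂
  pm := fun _ _ _ _ _ _ _ _ hv h => .pm hv h

theorem etaSubO : SubO EtaC := fun _ _ _ _ h hc => convEta h hc

end CBPV

open CBPV in
/-- η-law for CBPV thunks (one half): for closed values of thunk type. -/
theorem cbpv_eta_thunk :
    ∀ (κ : CTy0) (v : Val [] (.U κ)),
      CtxLeV [] (.U κ) v (.thunk (.force v)) := by
  intro κ v
  exact ⟨EtaV, EtaC, etaIsCong, etaSubO, .eta (etaReflV v)⟩
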